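/- (Convergence of the idealized two-timescale MFC scheme.) Under Assumption (Lip), L_p < |𝒳|c_min, and 0 < φ < φ_max, let (ρ^Q_n)_n and (ρ^μ_n)_n be sequences in (0,1) with ∑_n ρ^Q_n = ∑_n ρ^μ_n = ∞, ∑_n ((ρ^Q_n)² + (ρ^μ_n)²) < ∞, and ρ^Q_n/ρ^μ_n → 0 as n → ∞. Define, from any initial (Q₀,μ₀) ∈ ℝ^{𝒳×𝒜} × Δ(𝒳), the iterates μ_{n+1} = μ_n + ρ^μ_n P₂(Q_n,μ_n) and Q_{n+1} = Q_n + ρ^Q_n T₂(Q_n,μ_n). Then (μ_n, Q_n) converges as n → ∞ to (μ*_{Q*φ}, Q*φ), where μ*_Q denotes the unique fixed point of μ ↦ P^{softmin_φ Q,μ}μ and Q*φ is the unique fixed point of Q ↦ B_{μ*_Q}Q. -/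

import Mathlib

open Finset Filter
open scoped Classical

noncomputable section

variable {X A : Type*}

/-- A probability vector on a finite set. -/
def IsProb [Fintype X] (μ : X → ℝ) : Prop := (∀ x, 0 ≤ μ x) ∧ ∑ x, μ x = 1

/-- ℓ¹ norm of a signed measure / vector on a finite set. -/
def l1 [Fintype X] (μ : X → ℝ) : ℝ := ∑ x, |μ x|

/-- Sup norm of a Q-table. -/
def supQ [Fintype X] [Fintype A] [Nonempty X] [Nonempty A] (Q : X → A → ℝ) : ℝ :=
  Finset.univ.sup' Finset.univ_nonempty (fun xa : X × A => |Q xa.1 xa.2|)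

/-- Minimum of a row of a Q-table (minimum over actions). -/
def minRow [Fintype A] [Nonempty A] (q : A → ℝ) : ℝ :=
  Finset.univ.inf' Finset.univ_nonempty q

/-- The soft-min distribution over actions with parameter φ. -/
def softmin [Fintype A] (φ : ℝ) (z : A → ℝ) (a : A) : ℝ :=
  Real.exp (-φ * z a) / ∑ a', Real.exp (-φ * z a')

/-- The argmin_e policy: uniform over the minimizers, zero elsewhere. -/
def argminE [Fintype A] [Nonempty A] (q : A → ℝ) (a : A) : ℝ :=
  if q a = minRow q then (1 : ℝ) / (Finset.univ.filter fun a' => q a' = minRow q).card else 0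

/-- (P^{π,μ} ν)(x) = ∑_{x'} ν(x') ∑_a π(a|x') p(x|x',a,μ). -/
def Ppush [Fintype X] [Fintype A] (p : X → A → (X → ℝ) → X → ℝ)
    (π : X → A → ℝ) (μ ν : X → ℝ) (x : X) : ℝ :=
  ∑ x', ν x' * ∑ a, π x' a * p x' a μ x

/-- P₂(Q,μ) = P^{softmin_φ Q, μ} μ − μ. -/
def P2 [Fintype X] [Fintype A] (φ : ℝ) (p : X → A → (X → ℝ) → X → ℝ)
    (Q : X → A → ℝ) (μ : X → ℝ) (x : X) : ℝ :=
  Ppush p (fun x' => softmin φ (Q x')) μ μ x - μ x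

/-- The Bellman operator (B_μ Q)(x,a) = f(x,a,μ) + γ ∑_{x'} p(x'|x,a,μ) min_{a'} Q(x',a'). -/
def bell [Fintype X] [Fintype A] [Nonempty A]
    (f : X → A → (X → ℝ) → ℝ) (p : X → A → (X → ℝ) → X → ℝ) (γ : ℝ)
    (μ : X → ℝ) (Q : X → A → ℝ) (x : X) (a : A) : ℝ :=
  f x a μ + γ * ∑ x', p x a μ x' * minRow (Q x')

/-- T₂(Q,μ) = B_μ Q − Q. -/
def T2 [Fintype X] [Fintype A] [Nonempty A]
    (f : X → A → (X → ℝ) → ℝ) (p : X → A → (X → ℝ) → X → ℝ) (γ : ℝ)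
    (Q : X → A → ℝ) (μ : X → ℝ) (x : X) (a : A) : ℝ :=
  bell f p γ μ Q x a - Q x a


section RealIneq

lemma exp_quad {x : ℝ} (h1 : x ≤ 1) (h0 : 0 ≤ x) : Real.exp x ≤ 1 + x + x^2 := by
  have h : |x| ≤ 1 := by rw [abs_of_nonneg h0]; exact h1
  have := Real.exp_bound h (by norm_num : 0 < 3)
  have h2 : |x| ^ 3 ≤ x^2 := by rw [abs_of_nonneg h0]; nlinarith
  simp [Finset.sum_range_succ, Nat.factorial] at this
  rw [abs_le] at this
  obtain ⟨l, r⟩ := this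
  nlinarith

/-- Key inequality for the one-coordinate softmin Lipschitz bound. -/
lemma key_ineq (r u s : ℝ) (hr : 0 ≤ r) (hu : 0 < u) (hs : 0 ≤ s) :
    2*r*(u - u*Real.exp (-s)) ≤ s*((r+u)*(r+u*Real.exp (-s))) := by
  have he : (0:ℝ) < Real.exp (-s) := Real.exp_pos _
  rcases le_total s 2 with h2 | h2
  · -- s ≤ 2 : use  u(1-e^{-s}) = m (E - e) with m = u e^{-s/2}
    set x := s/2 with hx
    have hx0 : 0 ≤ x := by positivity
    have hx1 : x ≤ 1 := by simp [hx]; linarith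
    have hE : Real.exp x ≤ 1 + x + x^2 := exp_quad hx1 hx0
    have hee : 1 - x ≤ Real.exp (-x) := by
      have := Real.add_one_le_exp (-x); linarith
    have hme : Real.exp (-s) = Real.exp (-x) * Real.exp (-x) := by
      rw [← Real.exp_add]; congr 1; rw [hx]; ring
    have hEe : Real.exp x * Real.exp (-x) = 1 := by
      rw [← Real.exp_add]; simp
    set e := Real.exp (-x) with hedef
    set E := Real.exp x with hEdef
    have he0 : 0 < e := Real.exp_pos _
    have hE0 : 0 < E := Real.exp_pos _
    -- E - e ≤ 4x = 2s
    have hEe4 : E - e ≤ 2*s := by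
      have : E - e ≤ (1 + x + x^2) - (1 - x) := by linarith
      have hxx : x^2 ≤ x := by nlinarith
      have : E - e ≤ 3*x := by linarith
      linarith
    -- m = u*e
    -- LHS = 2 r m (E - e);   (r+u)(r+u e^2) ≥ (r+m)^2 ≥ 4 r m
    have key1 : u - u * (e*e) = (u*e) * (E - e) := by
      have : u * e * E = u := by
        calc u * e * E = u * (E * e) := by ring
        _ = u := by rw [mul_comm E e] at *; rw [show e * E = 1 by rw [hedef, hEdef, ← Real.exp_add]; simp]; ring
      nlinarith [this]
    have key2 : (r + u*e)^2 ≤ (r+u)*(r+u*(e*e)) := by nlinarith [mul_nonneg (mul_nonneg hr hu.le) (sq_nonneg (1-e))]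
    have key3 : 4*(r*(u*e)) ≤ (r + u*e)^2 := by nlinarith [sq_nonneg (r - u*e)]
    rw [hme]
    calc 2*r*(u - u*(e*e)) = 2*(r*(u*e))*(E - e) := by rw [key1]; ring
    _ ≤ 2*(r*(u*e))*(2*s) := by
        apply mul_le_mul_of_nonneg_left hEe4; positivity
    _ = s * (4*(r*(u*e))) := by ring
    _ ≤ s * ((r+u*e)^2) := by apply mul_le_mul_of_nonneg_left key3 hs
    _ ≤ s * ((r+u)*(r+u*(e*e))) := by apply mul_le_mul_of_nonneg_left key2 hs
  · -- s ≥ 2 : trivial bound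
    have h1 : 2*r*(u - u*Real.exp (-s)) ≤ 2*(r*u) := by nlinarith [mul_nonneg hr (mul_nonneg hu.le he.le)]
    have h2' : 2*(r*u) ≤ s*((r+u)*(r+u*Real.exp (-s))) := by
      have hprod : r*u ≤ (r+u)*(r+u*Real.exp (-s)) := by
        nlinarith [mul_nonneg hr hr, mul_nonneg (mul_nonneg hr hu.le) he.le,
          mul_nonneg (mul_nonneg hu.le hu.le) he.le]
      have hpos : (0:ℝ) ≤ (r+u)*(r+u*Real.exp (-s)) := by positivity
      nlinarith
    linarith

end RealIneq

section Softmin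
variable {A : Type*} [Fintype A] [Nonempty A]
lemma abs_helper (r p q s S S' : ℝ) (hr : 0 ≤ r) (hp : 0 < p) (hq : 0 < q)
    (hs0 : 0 ≤ s) (hS : S = r + p) (hS' : S' = r + q)
    (hpq : q = p * Real.exp (-s) ∨ p = q * Real.exp (-s)) :
    2*r*|p - q| / (S*S') ≤ s := by
  have key : ∀ x : ℝ, 0 < x → 2*x*0 ≤ 0 := by intro x _; ring_nf; exact le_refl 0
  have hSS : 0 < S * S' := by rw [hS, hS']; positivity
  rw [div_le_iff₀ hSS]
  have hexp1 : Real.exp (-s) ≤ 1 := Real.exp_le_one_iff.mpr (by linarith)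
  rcases hpq with h | h
  · have habs : |p - q| = p - p * Real.exp (-s) := by
      rw [h, abs_of_nonneg]; nlinarith
    rw [habs, hS, hS', h]
    calc 2*r*(p - p*Real.exp (-s)) ≤ s*((r+p)*(r+p*Real.exp (-s))) :=
          key_ineq r p s hr hp hs0
    _ = s * ((r + p) * (r + p * Real.exp (-s))) := by ring
  · have habs : |p - q| = q - q * Real.exp (-s) := by
      rw [h, abs_of_nonpos]; ring_nf; nlinarith
    rw [habs, hS, hS', h]
    calc 2*r*(q - q*Real.exp (-s)) ≤ s*((r+q)*(r+q*Real.exp (-s))) :=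
          key_ineq r q s hr hq hs0
    _ = s * ((r + q * Real.exp (-s)) * (r + q)) := by ring

lemma softmin_update [Fintype A] [Nonempty A] {φ : ℝ} (hφ : 0 < φ)
    (w : A → ℝ) (b : A) (t : ℝ) :
    ∑ a, |softmin φ w a - softmin φ (Function.update w b t) a| ≤ φ * |w b - t| := by
  classical
  set u : A → ℝ := fun a => Real.exp (-φ * w a) with hu
  set v : ℝ := Real.exp (-φ * t) with hv
  set r : ℝ := ∑ a ∈ univ.erase b, u a with hrdef
  have hr : 0 ≤ r := Finset.sum_nonneg fun a _ => (Real.exp_pos _).le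
  have hub : 0 < u b := Real.exp_pos _
  have hua : ∀ a, 0 < u a := fun a => Real.exp_pos _
  have hv0 : 0 < v := Real.exp_pos _
  set S : ℝ := ∑ a, u a with hSdef
  have hS : S = r + u b := by
    rw [hSdef, hrdef, ← Finset.add_sum_erase _ u (mem_univ b)]; ring
  have hupdate : ∀ a, Real.exp (-φ * (Function.update w b t) a)
      = if a = b then v else u a := by
    intro a
    by_cases h : a = b <;> simp [h, Function.update, hv, hu]
  set S' : ℝ := ∑ a, Real.exp (-φ * (Function.update w b t) a) with hS'def
  have hS' : S' = r + v := by
    rw [hS'def, ← Finset.add_sum_erase _ _ (mem_univ b)]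
    rw [hupdate b, if_pos rfl]
    rw [Finset.sum_congr rfl (fun a ha => by
      rw [hupdate a, if_neg (Finset.ne_of_mem_erase ha)])]
    ring
  have hSpos : 0 < S := by rw [hS]; linarith
  have hS'pos : 0 < S' := by rw [hS']; linarith
  have e1 : ∀ a, softmin φ w a = u a / S := fun a => rfl
  have e2 : ∀ a, softmin φ (Function.update w b t) a
      = (if a = b then v else u a) / S' := by
    intro a; rw [← hupdate a]; rfl
  have hterm : ∀ a ∈ univ.erase b,
      |softmin φ w a - softmin φ (Function.update w b t) a|
        = u a * |u b - v| / (S*S') := by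
    intro a ha
    rw [e1 a, e2 a, if_neg (Finset.ne_of_mem_erase ha)]
    rw [div_sub_div _ _ hSpos.ne' hS'pos.ne', abs_div]
    rw [abs_of_pos (by positivity : (0:ℝ) < S * S')]
    congr 1
    rw [show u a * S' - S * u a = u a * (S' - S) by ring, abs_mul,
      abs_of_pos (hua a)]
    congr 1
    rw [hS, hS', abs_sub_comm]
    congr 1
    ring
  have htermb : |softmin φ w b - softmin φ (Function.update w b t) b|
      = r * |u b - v| / (S*S') := by
    rw [e1 b, e2 b, if_pos rfl]
    rw [div_sub_div _ _ hSpos.ne' hS'pos.ne', abs_div]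
    rw [abs_of_pos (by positivity : (0:ℝ) < S * S')]
    congr 1
    rw [show u b * S' - S * v = r * (u b - v) by rw [hS, hS']; ring, abs_mul,
      abs_of_nonneg hr]
  have hsplit : ∑ a, |softmin φ w a - softmin φ (Function.update w b t) a|
      = 2*r*|u b - v| / (S*S') := by
    rw [← Finset.add_sum_erase _ _ (mem_univ b), htermb,
      Finset.sum_congr rfl hterm, ← Finset.sum_div, ← Finset.sum_mul, ← hrdef]
    ring
  rw [hsplit]
  refine abs_helper r (u b) v (φ * |w b - t|) S S' hr hub hv0 (by positivity) hS hS' ?_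
  rcases le_total (w b) t with h | h
  · left
    have habs : |w b - t| = t - w b := by rw [abs_of_nonpos (by linarith)]; ring
    show Real.exp (-φ * t) = Real.exp (-φ * w b) * Real.exp (-(φ * |w b - t|))
    rw [habs, ← Real.exp_add]; congr 1; ring
  · right
    have habs : |w b - t| = w b - t := abs_of_nonneg (by linarith)
    show Real.exp (-φ * w b) = Real.exp (-φ * t) * Real.exp (-(φ * |w b - t|))
    rw [habs, ← Real.exp_add]; congr 1; ring

lemma softmin_lip [Fintype A] [Nonempty A] {φ : ℝ} (hφ : 0 < φ) (z z' : A → ℝ) :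
    ∑ a, |softmin φ z a - softmin φ z' a| ≤ φ * ∑ a, |z a - z' a| := by
  classical
  have H : ∀ s : Finset A,
      ∑ a, |softmin φ (fun a => if a ∈ s then z' a else z a) a - softmin φ z a|
        ≤ φ * ∑ a ∈ s, |z a - z' a| := by
    intro s
    induction s using Finset.induction_on with
    | empty => simp
    | @insert b s hb ih =>
      have hmix : (fun a => if a ∈ insert b s then z' a else z a)
          = Function.update (fun a => if a ∈ s then z' a else z a) b (z' b) := by
        funext a
        by_cases h : a = b
        · subst h; simp [Function.update]
        · simp [Function.update, h, Finset.mem_insert]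
      rw [hmix]
      calc ∑ a, |softmin φ (Function.update (fun a => if a ∈ s then z' a else z a) b (z' b)) a
              - softmin φ z a|
          ≤ ∑ a, (|softmin φ (Function.update (fun a => if a ∈ s then z' a else z a) b (z' b)) a
              - softmin φ (fun a => if a ∈ s then z' a else z a) a|
            + |softmin φ (fun a => if a ∈ s then z' a else z a) a - softmin φ z a|) := by
            apply Finset.sum_le_sum
            intro a _
            exact abs_sub_le _ _ _
        _ = ∑ a, |softmin φ (fun a => if a ∈ s then z' a else z a) a
              - softmin φ (Function.update (fun a => if a ∈ s then z' a else z a) b (z' b)) a|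
            + ∑ a, |softmin φ (fun a => if a ∈ s then z' a else z a) a - softmin φ z a| := by
            rw [Finset.sum_add_distrib]
            congr 1
            apply Finset.sum_congr rfl
            intro a _
            rw [abs_sub_comm]
        _ ≤ φ * |(fun a => if a ∈ s then z' a else z a) b - z' b|
            + φ * ∑ a ∈ s, |z a - z' a| := by
            gcongr
            exact softmin_update hφ _ b (z' b)
        _ = φ * ∑ a ∈ insert b s, |z a - z' a| := by
            rw [Finset.sum_insert hb]
            simp only [hb, if_false]
            ring
  have := H Finset.univ
  simp only [Finset.mem_univ, if_true] at this
  calc ∑ a, |softmin φ z a - softmin φ z' a|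
      = ∑ a, |softmin φ z' a - softmin φ z a| := by
        apply Finset.sum_congr rfl; intro a _; rw [abs_sub_comm]
    _ ≤ φ * ∑ a, |z a - z' a| := this

end Softmin

-- ===== helper lemmas =====
section Helpers
variable [Fintype X] [Fintype A] [Nonempty X] [Nonempty A]

lemma l1_nonneg (μ : X → ℝ) : 0 ≤ l1 μ :=
  Finset.sum_nonneg fun _ _ => abs_nonneg _

lemma abs_le_l1 (μ : X → ℝ) (x : X) : |μ x| ≤ l1 μ :=
  Finset.single_le_sum (f := fun y => |μ y|) (fun _ _ => abs_nonneg _) (mem_univ x)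

lemma supQ_nonneg (Q : X → A → ℝ) : 0 ≤ supQ Q := by
  obtain ⟨xa, _, h⟩ := Finset.exists_mem_eq_sup' (univ_nonempty (α := X × A))
    (fun xa : X × A => |Q xa.1 xa.2|)
  rw [supQ, h]
  exact abs_nonneg _

lemma abs_le_supQ (Q : X → A → ℝ) (x : X) (a : A) : |Q x a| ≤ supQ Q :=
  Finset.le_sup' (fun xa : X × A => |Q xa.1 xa.2|) (mem_univ ((x, a) : X × A))

lemma supQ_le {Q : X → A → ℝ} {M : ℝ} (h : ∀ x a, |Q x a| ≤ M) : supQ Q ≤ M :=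
  Finset.sup'_le _ _ fun xa _ => h xa.1 xa.2

lemma minRow_le (q : A → ℝ) (a : A) : minRow q ≤ q a :=
  Finset.inf'_le _ (mem_univ a)

lemma abs_minRow_le {q : A → ℝ} {M : ℝ} (h : ∀ a, |q a| ≤ M) : |minRow q| ≤ M := by
  obtain ⟨a, _, ha⟩ := Finset.exists_mem_eq_inf' (univ_nonempty (α := A)) q
  rw [minRow, ha]
  exact h a

lemma abs_minRow_sub {q q' : A → ℝ} {M : ℝ} (h : ∀ a, |q a - q' a| ≤ M) :
    |minRow q - minRow q'| ≤ M := by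
  have h1 : ∀ (r r' : A → ℝ), (∀ a, |r a - r' a| ≤ M) → minRow r ≤ minRow r' + M := by
    intro r r' hr
    obtain ⟨a, _, ha⟩ := Finset.exists_mem_eq_inf' (univ_nonempty (α := A)) r'
    calc minRow r ≤ r a := minRow_le r a
      _ ≤ r' a + M := by have := (abs_le.mp (hr a)).2; linarith
      _ = minRow r' + M := by rw [minRow, ← ha]
  have h2 := h1 q q' h
  have h3 := h1 q' q (fun a => by rw [abs_sub_comm]; exact h a)
  rw [abs_le]
  constructor <;> linarith

end Helpers

section Dobrushin
variable [Fintype X]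

lemma dobrushin (K : X → X → ℝ) (c : ℝ) (hc : 0 ≤ c) (hK : ∀ x' x, c ≤ K x' x)
    (hK1 : ∀ x', ∑ x, K x' x = 1) (d : X → ℝ) (hd : ∑ x, d x = 0) :
    ∑ x, |∑ x', d x' * K x' x| ≤ (1 - (Fintype.card X : ℝ) * c) * ∑ x, |d x| := by
  have step1 : ∀ x, ∑ x', d x' * K x' x = ∑ x', d x' * (K x' x - c) := by
    intro x
    rw [show ∑ x', d x' * (K x' x - c) = ∑ x', d x' * K x' x - (∑ x', d x') * c by
      rw [Finset.sum_mul, ← Finset.sum_sub_distrib]; apply Finset.sum_congr rfl; intros; ring]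
    rw [hd]; ring
  calc ∑ x, |∑ x', d x' * K x' x| = ∑ x, |∑ x', d x' * (K x' x - c)| := by
        apply Finset.sum_congr rfl; intro x _; rw [step1]
    _ ≤ ∑ x, ∑ x', |d x'| * (K x' x - c) := by
        apply Finset.sum_le_sum; intro x _
        calc |∑ x', d x' * (K x' x - c)| ≤ ∑ x', |d x' * (K x' x - c)| :=
              Finset.abs_sum_le_sum_abs _ _
          _ = ∑ x', |d x'| * (K x' x - c) := by
              apply Finset.sum_congr rfl; intro x' _
              rw [abs_mul, abs_of_nonneg (show (0:ℝ) ≤ K x' x - c by linarith [hK x' x])]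
    _ = ∑ x', |d x'| * ∑ x, (K x' x - c) := by
        rw [Finset.sum_comm]
        apply Finset.sum_congr rfl; intro x' _
        rw [Finset.mul_sum]
    _ = ∑ x', |d x'| * (1 - (Fintype.card X : ℝ) * c) := by
        apply Finset.sum_congr rfl; intro x' _
        congr 1
        rw [Finset.sum_sub_distrib, hK1 x']
        simp [Finset.card_univ, mul_comm]
    _ = (1 - (Fintype.card X : ℝ) * c) * ∑ x, |d x| := by
        rw [← Finset.sum_mul]; ring

end Dobrushin

section Phi
variable [Fintype X] [Fintype A] [Nonempty X] [Nonempty A]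
variable {p : X → A → (X → ℝ) → X → ℝ}

lemma Ppush_isProb (hp0 : ∀ x a μ x', IsProb μ → 0 ≤ p x a μ x')
    (hp1 : ∀ x a μ, IsProb μ → ∑ x', p x a μ x' = 1)
    (π : X → A → ℝ) (hπ0 : ∀ x a, 0 ≤ π x a) (hπ1 : ∀ x, ∑ a, π x a = 1)
    (μ ν : X → ℝ) (hμ : IsProb μ) (hν : IsProb ν) : IsProb (Ppush p π μ ν) := by
  constructor
  · intro x
    apply Finset.sum_nonneg
    intro x' _
    apply mul_nonneg (hν.1 x')
    apply Finset.sum_nonneg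
    intro a _
    exact mul_nonneg (hπ0 x' a) (hp0 x' a μ x hμ)
  · have expand : ∑ x, Ppush p π μ ν x = ∑ x', ν x' * ∑ a, π x' a * ∑ x, p x' a μ x := by
      simp only [Ppush]
      rw [Finset.sum_comm]
      apply Finset.sum_congr rfl; intro x' _
      rw [← Finset.mul_sum]
      congr 1
      rw [Finset.sum_comm]
      apply Finset.sum_congr rfl; intro a _
      rw [Finset.mul_sum]
    rw [expand]
    calc ∑ x', ν x' * ∑ a, π x' a * ∑ x, p x' a μ x
        = ∑ x', ν x' * ∑ a, π x' a := by
          apply Finset.sum_congr rfl; intro x' _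
          congr 1
          apply Finset.sum_congr rfl; intro a _
          rw [hp1 x' a μ hμ, mul_one]
      _ = ∑ x', ν x' := by
          apply Finset.sum_congr rfl; intro x' _
          rw [hπ1 x', mul_one]
      _ = 1 := hν.2

/-- mass perturbation: Dobrushin contraction -/
lemma Ppush_mass (cmin : ℝ) (hc : 0 ≤ cmin)
    (hcmin : ∀ x a μ x', IsProb μ → cmin ≤ p x a μ x')
    (hp1 : ∀ x a μ, IsProb μ → ∑ x', p x a μ x' = 1)
    (π : X → A → ℝ) (hπ0 : ∀ x a, 0 ≤ π x a) (hπ1 : ∀ x, ∑ a, π x a = 1)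
    (κ : X → ℝ) (μ ν : X → ℝ) (hμ : IsProb κ) (hν : ∑ x, (μ x - ν x) = 0) :
    ∑ x, |Ppush p π κ μ x - Ppush p π κ ν x|
      ≤ (1 - (Fintype.card X : ℝ) * cmin) * l1 (fun y => μ y - ν y) := by
  have hK : ∀ x' x, cmin ≤ ∑ a, π x' a * p x' a κ x := by
    intro x' x
    calc cmin = ∑ a, π x' a * cmin := by rw [← Finset.sum_mul, hπ1 x', one_mul]
      _ ≤ ∑ a, π x' a * p x' a κ x := by
        apply Finset.sum_le_sum; intro a _
        exact mul_le_mul_of_nonneg_left (hcmin x' a κ x hμ) (hπ0 x' a)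
  have hK1 : ∀ x', ∑ x, (∑ a, π x' a * p x' a κ x) = 1 := by
    intro x'
    rw [Finset.sum_comm]
    calc ∑ a, ∑ x, π x' a * p x' a κ x = ∑ a, π x' a * ∑ x, p x' a κ x := by
          apply Finset.sum_congr rfl; intro a _; rw [Finset.mul_sum]
      _ = ∑ a, π x' a := by
          apply Finset.sum_congr rfl; intro a _; rw [hp1 x' a κ hμ, mul_one]
      _ = 1 := hπ1 x'
  have := dobrushin (fun x' x => ∑ a, π x' a * p x' a κ x) cmin hc hK hK1
    (fun y => μ y - ν y) hν
  calc ∑ x, |Ppush p π κ μ x - Ppush p π κ ν x|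
      = ∑ x, |∑ x', (μ x' - ν x') * ∑ a, π x' a * p x' a κ x| := by
        apply Finset.sum_congr rfl; intro x _
        rw [Ppush, Ppush, ← Finset.sum_sub_distrib]
        congr 1
        apply Finset.sum_congr rfl; intro x' _
        ring
    _ ≤ (1 - (Fintype.card X : ℝ) * cmin) * l1 (fun y => μ y - ν y) := this

/-- kernel perturbation -/
lemma Ppush_kernel {μ ν : X → ℝ} (D : ℝ)
    (hD : ∀ x a, ∑ x', |p x a μ x' - p x a ν x'| ≤ D)
    (π : X → A → ℝ) (hπ0 : ∀ x a, 0 ≤ π x a) (hπ1 : ∀ x, ∑ a, π x a = 1)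
    (κ : X → ℝ) (hκ : IsProb κ) :
    ∑ x, |Ppush p π μ κ x - Ppush p π ν κ x| ≤ D := by
  have step1 : ∀ x, |Ppush p π μ κ x - Ppush p π ν κ x|
      ≤ ∑ x', κ x' * ∑ a, π x' a * |p x' a μ x - p x' a ν x| := by
    intro x
    have e : Ppush p π μ κ x - Ppush p π ν κ x
        = ∑ x', κ x' * ∑ a, π x' a * (p x' a μ x - p x' a ν x) := by
      simp only [Ppush]
      rw [← Finset.sum_sub_distrib]
      apply Finset.sum_congr rfl; intro x' _
      rw [← mul_sub, ← Finset.sum_sub_distrib]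
      congr 1
      apply Finset.sum_congr rfl; intro a _
      ring
    rw [e]
    calc |∑ x', κ x' * ∑ a, π x' a * (p x' a μ x - p x' a ν x)|
        ≤ ∑ x', |κ x' * ∑ a, π x' a * (p x' a μ x - p x' a ν x)| :=
          Finset.abs_sum_le_sum_abs _ _
      _ ≤ ∑ x', κ x' * ∑ a, π x' a * |p x' a μ x - p x' a ν x| := by
          apply Finset.sum_le_sum; intro x' _
          rw [abs_mul, abs_of_nonneg (hκ.1 x')]
          apply mul_le_mul_of_nonneg_left _ (hκ.1 x')
          calc |∑ a, π x' a * (p x' a μ x - p x' a ν x)|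
              ≤ ∑ a, |π x' a * (p x' a μ x - p x' a ν x)| :=
                Finset.abs_sum_le_sum_abs _ _
            _ ≤ ∑ a, π x' a * |p x' a μ x - p x' a ν x| := by
                apply Finset.sum_le_sum; intro a _
                rw [abs_mul, abs_of_nonneg (hπ0 x' a)]
  calc ∑ x, |Ppush p π μ κ x - Ppush p π ν κ x|
      ≤ ∑ x, ∑ x', κ x' * ∑ a, π x' a * |p x' a μ x - p x' a ν x| :=
        Finset.sum_le_sum fun x _ => step1 x
    _ = ∑ x', κ x' * ∑ a, π x' a * ∑ x, |p x' a μ x - p x' a ν x| := by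
        rw [Finset.sum_comm]
        apply Finset.sum_congr rfl; intro x' _
        rw [← Finset.mul_sum]
        congr 1
        rw [Finset.sum_comm]
        apply Finset.sum_congr rfl; intro a _
        rw [Finset.mul_sum]
    _ ≤ ∑ x', κ x' * ∑ a, π x' a * D := by
        apply Finset.sum_le_sum; intro x' _
        apply mul_le_mul_of_nonneg_left _ (hκ.1 x')
        apply Finset.sum_le_sum; intro a _
        exact mul_le_mul_of_nonneg_left (hD x' a) (hπ0 x' a)
    _ = D := by
        rw [show ∑ x', κ x' * ∑ a, π x' a * D = ∑ x', κ x' * D by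
          apply Finset.sum_congr rfl; intro x' _
          rw [← Finset.sum_mul, hπ1 x', one_mul]]
        rw [← Finset.sum_mul, hκ.2, one_mul]

/-- policy perturbation -/
lemma Ppush_policy {μ : X → ℝ} (hμ : IsProb μ)
    (hp0 : ∀ x a μ x', IsProb μ → 0 ≤ p x a μ x')
    (hp1 : ∀ x a μ, IsProb μ → ∑ x', p x a μ x' = 1)
    (π π' : X → A → ℝ) (D : ℝ) (hΔ : ∀ x', ∑ a, |π x' a - π' x' a| ≤ D)
    (κ : X → ℝ) (hκ : IsProb κ) :
    ∑ x, |Ppush p π μ κ x - Ppush p π' μ κ x| ≤ D := by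
  have step1 : ∀ x, |Ppush p π μ κ x - Ppush p π' μ κ x|
      ≤ ∑ x', κ x' * ∑ a, |π x' a - π' x' a| * p x' a μ x := by
    intro x
    have e : Ppush p π μ κ x - Ppush p π' μ κ x
        = ∑ x', κ x' * ∑ a, (π x' a - π' x' a) * p x' a μ x := by
      simp only [Ppush]
      rw [← Finset.sum_sub_distrib]
      apply Finset.sum_congr rfl; intro x' _
      rw [← mul_sub, ← Finset.sum_sub_distrib]
      congr 1
      apply Finset.sum_congr rfl; intro a _
      ring
    rw [e]
    calc |∑ x', κ x' * ∑ a, (π x' a - π' x' a) * p x' a μ x|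
        ≤ ∑ x', |κ x' * ∑ a, (π x' a - π' x' a) * p x' a μ x| :=
          Finset.abs_sum_le_sum_abs _ _
      _ ≤ ∑ x', κ x' * ∑ a, |π x' a - π' x' a| * p x' a μ x := by
          apply Finset.sum_le_sum; intro x' _
          rw [abs_mul, abs_of_nonneg (hκ.1 x')]
          apply mul_le_mul_of_nonneg_left _ (hκ.1 x')
          calc |∑ a, (π x' a - π' x' a) * p x' a μ x|
              ≤ ∑ a, |(π x' a - π' x' a) * p x' a μ x| :=
                Finset.abs_sum_le_sum_abs _ _
            _ ≤ ∑ a, |π x' a - π' x' a| * p x' a μ x := by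
                apply Finset.sum_le_sum; intro a _
                rw [abs_mul, abs_of_nonneg (hp0 x' a μ x hμ)]
  calc ∑ x, |Ppush p π μ κ x - Ppush p π' μ κ x|
      ≤ ∑ x, ∑ x', κ x' * ∑ a, |π x' a - π' x' a| * p x' a μ x :=
        Finset.sum_le_sum fun x _ => step1 x
    _ = ∑ x', κ x' * ∑ a, |π x' a - π' x' a| * ∑ x, p x' a μ x := by
        rw [Finset.sum_comm]
        apply Finset.sum_congr rfl; intro x' _
        rw [← Finset.mul_sum]
        congr 1
        rw [Finset.sum_comm]
        apply Finset.sum_congr rfl; intro a _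
        rw [Finset.mul_sum]
    _ = ∑ x', κ x' * ∑ a, |π x' a - π' x' a| := by
        apply Finset.sum_congr rfl; intro x' _
        congr 1
        apply Finset.sum_congr rfl; intro a _
        rw [hp1 x' a μ hμ, mul_one]
    _ ≤ ∑ x', κ x' * D := by
        apply Finset.sum_le_sum; intro x' _
        exact mul_le_mul_of_nonneg_left (hΔ x') (hκ.1 x')
    _ = D := by rw [← Finset.sum_mul, hκ.2, one_mul]

end Phi

section Bell
variable [Fintype X] [Fintype A] [Nonempty X] [Nonempty A]
variable {p : X → A → (X → ℝ) → X → ℝ} {f : X → A → (X → ℝ) → ℝ} {γ : ℝ}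

lemma bell_bound {μ : X → ℝ} {Q : X → A → ℝ} (hγ : 0 ≤ γ) (hμ : IsProb μ)
    (hp0 : ∀ x a μ x', IsProb μ → 0 ≤ p x a μ x')
    (hp1 : ∀ x a μ, IsProb μ → ∑ x', p x a μ x' = 1)
    (fnorm : ℝ) (hf : ∀ x a, |f x a μ| ≤ fnorm)
    (M : ℝ) (hM : ∀ x', |minRow (Q x')| ≤ M) :
    ∀ x a, |bell f p γ μ Q x a| ≤ fnorm + γ * M := by
  intro x a
  rw [bell]
  calc |f x a μ + γ * ∑ x', p x a μ x' * minRow (Q x')|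
      ≤ |f x a μ| + γ * |∑ x', p x a μ x' * minRow (Q x')| := by
        have t := abs_add_le (f x a μ) (γ * ∑ x', p x a μ x' * minRow (Q x'))
        have t2 : |γ * ∑ x', p x a μ x' * minRow (Q x')|
            = γ * |∑ x', p x a μ x' * minRow (Q x')| := by
          rw [abs_mul, abs_of_nonneg hγ]
        linarith
    _ ≤ fnorm + γ * M := by
        gcongr
        · exact hf x a
        · calc |∑ x', p x a μ x' * minRow (Q x')|
              ≤ ∑ x', |p x a μ x' * minRow (Q x')| := Finset.abs_sum_le_sum_abs _ _
            _ ≤ ∑ x', p x a μ x' * M := by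
                apply Finset.sum_le_sum; intro x' _
                rw [abs_mul, abs_of_nonneg (hp0 x a μ x' hμ)]
                exact mul_le_mul_of_nonneg_left (hM x') (hp0 x a μ x' hμ)
            _ = M := by rw [← Finset.sum_mul, hp1 x a μ hμ, one_mul]

lemma bell_diff {μ ν : X → ℝ} {Q Q' : X → A → ℝ} (hγ : 0 ≤ γ)
    (hμ : IsProb μ)
    (hp0 : ∀ x a μ x', IsProb μ → 0 ≤ p x a μ x')
    (hp1 : ∀ x a μ, IsProb μ → ∑ x', p x a μ x' = 1)
    (F : ℝ) (hF : ∀ x a, |f x a μ - f x a ν| ≤ F)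
    (P : ℝ) (hP : ∀ x a, ∑ x', |p x a μ x' - p x a ν x'| ≤ P)
    (D : ℝ) (hD : ∀ x', |minRow (Q x') - minRow (Q' x')| ≤ D)
    (M : ℝ) (hM0 : 0 ≤ M) (hM : ∀ x', |minRow (Q' x')| ≤ M) :
    ∀ x a, |bell f p γ μ Q x a - bell f p γ ν Q' x a| ≤ F + γ * D + γ * (P * M) := by
  intro x a
  have e : bell f p γ μ Q x a - bell f p γ ν Q' x a
      = (f x a μ - f x a ν)
        + γ * (∑ x', p x a μ x' * (minRow (Q x') - minRow (Q' x')))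
        + γ * (∑ x', (p x a μ x' - p x a ν x') * minRow (Q' x')) := by
    simp only [bell]
    have key : (∑ x', p x a μ x' * minRow (Q x')) - ∑ x', p x a ν x' * minRow (Q' x')
        = (∑ x', p x a μ x' * (minRow (Q x') - minRow (Q' x')))
          + ∑ x', (p x a μ x' - p x a ν x') * minRow (Q' x') := by
      rw [← Finset.sum_add_distrib, ← Finset.sum_sub_distrib]
      apply Finset.sum_congr rfl; intros; ring
    linear_combination γ * key
  rw [e]
  have h1 : |∑ x', p x a μ x' * (minRow (Q x') - minRow (Q' x'))| ≤ D := by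
    calc |∑ x', p x a μ x' * (minRow (Q x') - minRow (Q' x'))|
        ≤ ∑ x', |p x a μ x' * (minRow (Q x') - minRow (Q' x'))| := Finset.abs_sum_le_sum_abs _ _
      _ ≤ ∑ x', p x a μ x' * D := by
          apply Finset.sum_le_sum; intro x' _
          rw [abs_mul, abs_of_nonneg (hp0 x a μ x' hμ)]
          exact mul_le_mul_of_nonneg_left (hD x') (hp0 x a μ x' hμ)
      _ = D := by rw [← Finset.sum_mul, hp1 x a μ hμ, one_mul]
  have h2 : |∑ x', (p x a μ x' - p x a ν x') * minRow (Q' x')| ≤ P * M := by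
    calc |∑ x', (p x a μ x' - p x a ν x') * minRow (Q' x')|
        ≤ ∑ x', |(p x a μ x' - p x a ν x') * minRow (Q' x')| := Finset.abs_sum_le_sum_abs _ _
      _ ≤ ∑ x', |p x a μ x' - p x a ν x'| * M := by
          apply Finset.sum_le_sum; intro x' _
          rw [abs_mul]
          exact mul_le_mul_of_nonneg_left (hM x') (abs_nonneg _)
      _ = (∑ x', |p x a μ x' - p x a ν x'|) * M := by rw [Finset.sum_mul]
      _ ≤ P * M := mul_le_mul_of_nonneg_right (hP x a) hM0
  calc |(f x a μ - f x a ν)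
        + γ * (∑ x', p x a μ x' * (minRow (Q x') - minRow (Q' x')))
        + γ * (∑ x', (p x a μ x' - p x a ν x') * minRow (Q' x'))|
      ≤ |f x a μ - f x a ν|
        + γ * |∑ x', p x a μ x' * (minRow (Q x') - minRow (Q' x'))|
        + γ * |∑ x', (p x a μ x' - p x a ν x') * minRow (Q' x')| := by
        have t1 := abs_add_le ((f x a μ - f x a ν)
          + γ * (∑ x', p x a μ x' * (minRow (Q x') - minRow (Q' x'))))
          (γ * (∑ x', (p x a μ x' - p x a ν x') * minRow (Q' x')))
        have t2 := abs_add_le (f x a μ - f x a ν)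
          (γ * (∑ x', p x a μ x' * (minRow (Q x') - minRow (Q' x'))))
        have t3 : |γ * (∑ x', p x a μ x' * (minRow (Q x') - minRow (Q' x')))|
            = γ * |∑ x', p x a μ x' * (minRow (Q x') - minRow (Q' x'))| := by
          rw [abs_mul, abs_of_nonneg hγ]
        have t4 : |γ * (∑ x', (p x a μ x' - p x a ν x') * minRow (Q' x'))|
            = γ * |∑ x', (p x a μ x' - p x a ν x') * minRow (Q' x')| := by
          rw [abs_mul, abs_of_nonneg hγ]
        linarith
    _ ≤ F + γ * D + γ * (P * M) := by
        gcongr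
        exact hF x a
  
end Bell

-- softmin basic lemmas (to be inserted before Phi_master in final file)
section SoftminBasic
variable [Fintype A] [Nonempty A]

lemma sum_exp_pos' (g : A → ℝ) : 0 < ∑ a, Real.exp (g a) :=
  Finset.sum_pos (fun _ _ => Real.exp_pos _) univ_nonempty

lemma softmin_nonneg (φ : ℝ) (z : A → ℝ) (a : A) : 0 ≤ softmin φ z a := by
  unfold softmin; positivity

lemma softmin_sum (φ : ℝ) (z : A → ℝ) : ∑ a, softmin φ z a = 1 := by
  unfold softmin
  rw [← Finset.sum_div]
  exact div_self (sum_exp_pos' _).ne'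


end SoftminBasic

section Master
variable [Fintype X] [Fintype A] [Nonempty X] [Nonempty A]

lemma Phi_master {p : X → A → (X → ℝ) → X → ℝ}
    (hp0 : ∀ x a μ x', IsProb μ → 0 ≤ p x a μ x')
    (hp1 : ∀ x a μ, IsProb μ → ∑ x', p x a μ x' = 1)
    (cmin : ℝ) (hcmin0 : 0 ≤ cmin)
    (hcmin : ∀ x a μ x', IsProb μ → cmin ≤ p x a μ x')
    (Lp : ℝ)
    (hLp : ∀ x a μ μ', IsProb μ → IsProb μ' →
      ∑ x', |p x a μ x' - p x a μ' x'| ≤ Lp * l1 (fun y => μ y - μ' y))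
    {φ : ℝ} (hφ0 : 0 < φ) (Q Q' : X → A → ℝ) (μ ν : X → ℝ)
    (hμ : IsProb μ) (hν : IsProb ν) :
    l1 (fun x => Ppush p (fun x' => softmin φ (Q x')) μ μ x
        - Ppush p (fun x' => softmin φ (Q' x')) ν ν x)
      ≤ (1 - (Fintype.card X : ℝ) * cmin + Lp) * l1 (fun y => μ y - ν y)
        + φ * (Fintype.card A : ℝ) * supQ (fun x a => Q x a - Q' x a) := by
  classical
  set πQ : X → A → ℝ := fun x' => softmin φ (Q x') with hπQ
  set πQ' : X → A → ℝ := fun x' => softmin φ (Q' x') with hπQ'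
  have hπ0 : ∀ x a, 0 ≤ πQ x a := fun x a => softmin_nonneg φ (Q x) a
  have hπ1 : ∀ x, ∑ a, πQ x a = 1 := fun x => softmin_sum φ (Q x)
  have hπ0' : ∀ x a, 0 ≤ πQ' x a := fun x a => softmin_nonneg φ (Q' x) a
  have hπ1' : ∀ x, ∑ a, πQ' x a = 1 := fun x => softmin_sum φ (Q' x)
  have hzero : ∑ x, (μ x - ν x) = 0 := by
    rw [Finset.sum_sub_distrib, hμ.2, hν.2]; ring
  have h1 := Ppush_mass (p := p) cmin hcmin0 hcmin hp1 πQ hπ0 hπ1 μ μ ν hμ hzero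
  have h2 := Ppush_kernel (p := p) (μ := μ) (ν := ν) (Lp * l1 (fun y => μ y - ν y))
    (fun x a => hLp x a μ ν hμ hν) πQ hπ0 hπ1 ν hν
  have hΔ : ∀ x', ∑ a, |πQ x' a - πQ' x' a|
      ≤ φ * (Fintype.card A : ℝ) * supQ (fun x a => Q x a - Q' x a) := by
    intro x'
    calc ∑ a, |πQ x' a - πQ' x' a| ≤ φ * ∑ a, |Q x' a - Q' x' a| :=
          softmin_lip hφ0 (Q x') (Q' x')
      _ ≤ φ * ∑ _a : A, supQ (fun x a => Q x a - Q' x a) := by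
          apply mul_le_mul_of_nonneg_left _ hφ0.le
          apply Finset.sum_le_sum
          intro a _
          exact abs_le_supQ (fun x a => Q x a - Q' x a) x' a
      _ = φ * (Fintype.card A : ℝ) * supQ (fun x a => Q x a - Q' x a) := by
          rw [Finset.sum_const, Finset.card_univ, nsmul_eq_mul]; ring
  have h3 := Ppush_policy (p := p) (μ := ν) hν hp0 hp1 πQ πQ'
    (φ * (Fintype.card A : ℝ) * supQ (fun x a => Q x a - Q' x a)) hΔ ν hν
  have split : l1 (fun x => Ppush p πQ μ μ x - Ppush p πQ' ν ν x)
      ≤ (∑ x, |Ppush p πQ μ μ x - Ppush p πQ μ ν x|)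
        + (∑ x, |Ppush p πQ μ ν x - Ppush p πQ ν ν x|)
        + (∑ x, |Ppush p πQ ν ν x - Ppush p πQ' ν ν x|) := by
    rw [l1, ← Finset.sum_add_distrib, ← Finset.sum_add_distrib]
    apply Finset.sum_le_sum
    intro x _
    calc |Ppush p πQ μ μ x - Ppush p πQ' ν ν x|
        = |(Ppush p πQ μ μ x - Ppush p πQ μ ν x)
            + (Ppush p πQ μ ν x - Ppush p πQ ν ν x)
            + (Ppush p πQ ν ν x - Ppush p πQ' ν ν x)| := by ring_nf
      _ ≤ _ := by
          have := abs_add_le ((Ppush p πQ μ μ x - Ppush p πQ μ ν x)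
            + (Ppush p πQ μ ν x - Ppush p πQ ν ν x))
            (Ppush p πQ ν ν x - Ppush p πQ' ν ν x)
          have := abs_add_le (Ppush p πQ μ μ x - Ppush p πQ μ ν x)
            (Ppush p πQ μ ν x - Ppush p πQ ν ν x)
          linarith
  calc l1 (fun x => Ppush p πQ μ μ x - Ppush p πQ' ν ν x) ≤ _ := split
    _ ≤ (1 - (Fintype.card X : ℝ) * cmin) * l1 (fun y => μ y - ν y)
        + Lp * l1 (fun y => μ y - ν y)
        + φ * (Fintype.card A : ℝ) * supQ (fun x a => Q x a - Q' x a) := by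
        have hg := add_le_add (add_le_add h1 h2) h3
        exact hg
    _ = (1 - (Fintype.card X : ℝ) * cmin + Lp) * l1 (fun y => μ y - ν y)
        + φ * (Fintype.card A : ℝ) * supQ (fun x a => Q x a - Q' x a) := by ring

end Master


section SeqConv

lemma seq_conv (x α ε : ℕ → ℝ) (c : ℝ) (hc : 0 < c)
    (hx : ∀ n, 0 ≤ x n)
    (hα0 : ∀ n, 0 ≤ α n) (hα1 : ∀ n, c * α n ≤ 1)
    (hrec : ∀ n, x (n+1) ≤ (1 - c * α n) * x n + α n * ε n)
    (hdiv : Tendsto (fun n => ∑ i ∈ range n, α i) atTop atTop)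
    (hε : Tendsto ε atTop (nhds 0)) :
    Tendsto x atTop (nhds 0) := by
  rw [Metric.tendsto_atTop]
  intro δ hδ
  set δ' := δ/3 with hδ'def
  have hδ' : 0 < δ' := by positivity
  -- eventually ε n ≤ c * δ'
  have hev : ∀ᶠ n in atTop, |ε n| ≤ c * δ' := by
    have := Metric.tendsto_atTop.mp hε (c*δ') (by positivity)
    obtain ⟨N, hN⟩ := this
    rw [eventually_atTop]
    refine ⟨N, fun n hn => ?_⟩
    have := (hN n hn).le
    rwa [Real.dist_eq, sub_zero] at this
  rw [eventually_atTop] at hev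
  obtain ⟨N₀, hN₀⟩ := hev
  -- key induction bound
  have key : ∀ n, N₀ ≤ n → x n ≤ δ' + x N₀ * ∏ i ∈ Ico N₀ n, (1 - c * α i) := by
    intro n hn
    induction n with
    | zero =>
      have : N₀ = 0 := Nat.le_zero.mp hn
      subst this
      simp
      linarith [hx 0]
    | succ m ih =>
      rcases Nat.lt_or_ge m N₀ with h | h
      · -- m + 1 = N₀
        have hm : N₀ = m + 1 := le_antisymm hn h
        rw [← hm]
        simp
        linarith [hx N₀]
      · have ihm := ih h
        have hfac : 0 ≤ 1 - c * α m := by linarith [hα1 m]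
        have hprod : ∏ i ∈ Ico N₀ (m+1), (1 - c * α i)
            = (∏ i ∈ Ico N₀ m, (1 - c * α i)) * (1 - c * α m) := by
          rw [Finset.prod_Ico_succ_top h]
        have hεm : α m * ε m ≤ α m * (c * δ') := by
          have := hN₀ m h
          have : ε m ≤ c * δ' := (abs_le.mp this).2
          exact mul_le_mul_of_nonneg_left this (hα0 m)
        calc x (m+1) ≤ (1 - c * α m) * x m + α m * ε m := hrec m
          _ ≤ (1 - c * α m) * (δ' + x N₀ * ∏ i ∈ Ico N₀ m, (1 - c * α i))
              + α m * (c * δ') := by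
              have := mul_le_mul_of_nonneg_left ihm hfac
              linarith
          _ = δ' + x N₀ * ∏ i ∈ Ico N₀ (m+1), (1 - c * α i)
              + (- c * α m * δ' + α m * (c * δ')) := by rw [hprod]; ring
          _ = δ' + x N₀ * ∏ i ∈ Ico N₀ (m+1), (1 - c * α i) := by ring
  -- the product tends to 0
  have hprodle : ∀ n, N₀ ≤ n → (∏ i ∈ Ico N₀ n, (1 - c * α i))
      ≤ Real.exp (-(c * ((∑ i ∈ range n, α i) - ∑ i ∈ range N₀, α i))) := by
    intro n hn
    have h1 : ∏ i ∈ Ico N₀ n, (1 - c * α i) ≤ ∏ i ∈ Ico N₀ n, Real.exp (-(c * α i)) := by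
      apply Finset.prod_le_prod
      · intro i _; linarith [hα1 i]
      · intro i _
        have := Real.add_one_le_exp (-(c * α i))
        linarith
    have h2 : ∏ i ∈ Ico N₀ n, Real.exp (-(c * α i))
        = Real.exp (∑ i ∈ Ico N₀ n, -(c * α i)) := by
      rw [Real.exp_sum]
    have h3 : ∑ i ∈ Ico N₀ n, -(c * α i) = -(c * ∑ i ∈ Ico N₀ n, α i) := by
      rw [Finset.mul_sum, ← Finset.sum_neg_distrib]
    have h4 : ∑ i ∈ Ico N₀ n, α i = (∑ i ∈ range n, α i) - ∑ i ∈ range N₀, α i := by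
      rw [Finset.sum_Ico_eq_sub _ hn]
    rw [h2, h3, h4] at h1
    exact h1
  have htend : Tendsto (fun n => x N₀ *
      Real.exp (-(c * ((∑ i ∈ range n, α i) - ∑ i ∈ range N₀, α i)))) atTop (nhds 0) := by
    have h5 : Tendsto (fun n => (∑ i ∈ range n, α i) - ∑ i ∈ range N₀, α i)
        atTop atTop := hdiv.atTop_add tendsto_const_nhds
    have h5' : Tendsto (fun n => c * ((∑ i ∈ range n, α i) - ∑ i ∈ range N₀, α i))
        atTop atTop := h5.const_mul_atTop hc
    have h6 : Tendsto (fun n => -(c * ((∑ i ∈ range n, α i) - ∑ i ∈ range N₀, α i)))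
        atTop atBot := tendsto_neg_atTop_atBot.comp h5'
    have h7 := (Real.tendsto_exp_atBot.comp h6)
    simpa using h7.const_mul (x N₀)
  -- conclude
  have hfin : ∀ᶠ n in atTop, x N₀ *
      Real.exp (-(c * ((∑ i ∈ range n, α i) - ∑ i ∈ range N₀, α i))) < δ' := by
    have := Metric.tendsto_atTop.mp htend δ' hδ'
    obtain ⟨N, hN⟩ := this
    rw [eventually_atTop]
    refine ⟨N, fun n hn => ?_⟩
    have := hN n hn
    rw [Real.dist_eq, sub_zero] at this
    calc x N₀ * Real.exp _ ≤ |x N₀ * Real.exp _| := le_abs_self _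
      _ < δ' := this
  rw [eventually_atTop] at hfin
  obtain ⟨N₁, hN₁⟩ := hfin
  refine ⟨max N₀ N₁, fun n hn => ?_⟩
  have hn0 : N₀ ≤ n := le_trans (le_max_left _ _) hn
  have hn1 : N₁ ≤ n := le_trans (le_max_right _ _) hn
  have b1 := key n hn0
  have b2 : x N₀ * (∏ i ∈ Ico N₀ n, (1 - c * α i)) ≤ x N₀ *
      Real.exp (-(c * ((∑ i ∈ range n, α i) - ∑ i ∈ range N₀, α i))) :=
    mul_le_mul_of_nonneg_left (hprodle n hn0) (hx N₀)
  have b3 := hN₁ n hn1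
  rw [Real.dist_eq, sub_zero, abs_of_nonneg (hx n)]
  calc x n ≤ δ' + x N₀ * ∏ i ∈ Ico N₀ n, (1 - c * α i) := b1
    _ ≤ δ' + x N₀ * Real.exp (-(c * ((∑ i ∈ range n, α i) - ∑ i ∈ range N₀, α i))) := by linarith
    _ < δ' + δ' := by linarith
    _ < δ := by rw [hδ'def]; linarith

end SeqConv
set_option maxHeartbeats 1000000

/-- convergence of the idealized two-timescale MFC scheme
(Q faster to 0, i.e. ρ^Q_n/ρ^μ_n → 0) to (μ*_{Q*φ}, Q*φ). -/
theorem mfc_two_timescale_convergence [Fintype X] [Fintype A] [Nonempty X] [Nonempty A]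
    (γ : ℝ) (hγ0 : 0 < γ) (hγ1 : γ < 1)
    (f : X → A → (X → ℝ) → ℝ) (fnorm : ℝ)
    (hf : ∀ x a μ, IsProb μ → |f x a μ| ≤ fnorm)
    (p : X → A → (X → ℝ) → X → ℝ)
    (hp0 : ∀ x a μ x', IsProb μ → 0 ≤ p x a μ x')
    (hp1 : ∀ x a μ, IsProb μ → ∑ x', p x a μ x' = 1)
    (cmin Lf Lp : ℝ) (hcmin0 : 0 ≤ cmin)
    (hcmin : ∀ x a μ x', IsProb μ → cmin ≤ p x a μ x')
    (hLf0 : 0 ≤ Lf) (hLp0 : 0 ≤ Lp)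
    (hLf : ∀ x a μ μ', IsProb μ → IsProb μ' →
      |f x a μ - f x a μ'| ≤ Lf * l1 (fun y => μ y - μ' y))
    (hLp : ∀ x a μ μ', IsProb μ → IsProb μ' →
      ∑ x', |p x a μ x' - p x a μ' x'| ≤ Lp * l1 (fun y => μ y - μ' y))
    (hLpc : Lp < (Fintype.card X : ℝ) * cmin)
    (φ : ℝ) (hφ0 : 0 < φ)
    (hφmax : φ < ((Fintype.card X : ℝ) * cmin - Lp) / (Fintype.card A : ℝ)
        * ((1 - γ) / (Lf + (γ / (1 - γ)) * Lp * fnorm)))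
    -- μ*_Q : the unique fixed point of μ ↦ P^{softmin_φ Q, μ} μ
    (mustar : (X → A → ℝ) → X → ℝ)
    (hmustar : ∀ Q : X → A → ℝ, IsProb (mustar Q) ∧
      Ppush p (fun x' => softmin φ (Q x')) (mustar Q) (mustar Q) = mustar Q)
    -- Q*φ : the unique fixed point of Q ↦ B_{μ*_Q} Q
    (Qstarφ : X → A → ℝ) (hQball : supQ Qstarφ ≤ fnorm / (1 - γ))
    (hQfix : bell f p γ (mustar Qstarφ) Qstarφ = Qstarφ)
    -- learning rates
    (ρQ ρμ : ℕ → ℝ)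
    (hρQ : ∀ n, 0 < ρQ n ∧ ρQ n < 1) (hρμ : ∀ n, 0 < ρμ n ∧ ρμ n < 1)
    (hdivQ : ¬ Summable ρQ) (hdivμ : ¬ Summable ρμ)
    (hsq : Summable (fun n => (ρQ n) ^ 2 + (ρμ n) ^ 2))
    (hratio : Filter.Tendsto (fun n => ρQ n / ρμ n) Filter.atTop (nhds 0))
    -- the iterates
    (μseq : ℕ → X → ℝ) (Qseq : ℕ → X → A → ℝ)
    (hμ0 : IsProb (μseq 0))
    (hμrec : ∀ n, μseq (n + 1) = fun x => μseq n x + ρμ n * P2 φ p (Qseq n) (μseq n) x)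
    (hQrec : ∀ n, Qseq (n + 1) = fun x a => Qseq n x a + ρQ n * T2 f p γ (Qseq n) (μseq n) x a) :
    Filter.Tendsto μseq Filter.atTop (nhds (mustar Qstarφ))
      ∧ Filter.Tendsto Qseq Filter.atTop (nhds Qstarφ) := by  classical
  -- ===== numeric setup =====
  have hNX : (0:ℝ) < (Fintype.card X : ℝ) := by
    exact_mod_cast Fintype.card_pos
  have hNA : (0:ℝ) < (Fintype.card A : ℝ) := by
    exact_mod_cast Fintype.card_pos
  have h1γ : (0:ℝ) < 1 - γ := by linarith
  set μu : X → ℝ := fun _ => 1 / (Fintype.card X : ℝ) with hμudef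
  have hμu : IsProb μu := by
    constructor
    · intro x; positivity
    · rw [Finset.sum_const, Finset.card_univ, nsmul_eq_mul]
      field_simp
  have hfnorm0 : 0 ≤ fnorm :=
    le_trans (abs_nonneg _) (hf (Classical.arbitrary X) (Classical.arbitrary A) μu hμu)
  have hNc1 : (Fintype.card X : ℝ) * cmin ≤ 1 := by
    have h := hp1 (Classical.arbitrary X) (Classical.arbitrary A) μu hμu
    have h2 : ∑ _x' : X, cmin ≤ ∑ x', p (Classical.arbitrary X) (Classical.arbitrary A) μu x' :=
      Finset.sum_le_sum fun x' _ => hcmin _ _ μu x' hμu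
    rw [h, Finset.sum_const, Finset.card_univ, nsmul_eq_mul] at h2
    exact h2
  set c₁ : ℝ := (Fintype.card X : ℝ) * cmin - Lp with hc₁def
  have hc₁pos : 0 < c₁ := by rw [hc₁def]; linarith
  have hc₁le1 : c₁ ≤ 1 := by rw [hc₁def]; linarith
  set LB : ℝ := Lf + γ / (1 - γ) * Lp * fnorm with hLBdef
  have hLB0 : 0 ≤ LB :=
    add_nonneg hLf0 (mul_nonneg (mul_nonneg (div_nonneg hγ0.le h1γ.le) hLp0) hfnorm0)
  have hLBpos : 0 < LB := by
    rcases hLB0.lt_or_eq with h | h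
    · exact h
    · exfalso
      rw [← h, div_zero, mul_zero] at hφmax
      linarith
  have hkey : φ * (Fintype.card A : ℝ) * LB < c₁ * (1 - γ) := by
    rw [div_mul_div_comm] at hφmax
    rw [lt_div_iff₀ (by positivity)] at hφmax
    rw [hc₁def]
    nlinarith
  set LQ : ℝ := φ * (Fintype.card A : ℝ) with hLQdef
  have hLQ0 : 0 ≤ LQ := by positivity
  set Lstar : ℝ := LQ / c₁ with hLstardef
  have hLstar0 : 0 ≤ Lstar := div_nonneg hLQ0 hc₁pos.le
  set c₂ : ℝ := 1 - γ - LB * Lstar with hc₂def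
  have hc₂pos : 0 < c₂ := by
    have h : LB * Lstar < 1 - γ := by
      rw [hLstardef, ← mul_div_assoc, div_lt_iff₀ hc₁pos, hLQdef]
      nlinarith
    rw [hc₂def]
    linarith
  have hc₂le1 : c₂ ≤ 1 := by
    rw [hc₂def]
    nlinarith [mul_nonneg hLB0 hLstar0]
  set M : ℝ := max (supQ (Qseq 0)) (fnorm / (1 - γ)) with hMdef
  have hM0 : 0 ≤ M := le_trans (div_nonneg hfnorm0 h1γ.le) (le_max_right _ _)
  have hMfix : fnorm + γ * M ≤ M := by
    have h := le_max_right (supQ (Qseq 0)) (fnorm / (1 - γ))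
    rw [← hMdef] at h
    rw [div_le_iff₀ h1γ] at h
    nlinarith [h, hγ0.le, hM0]
  set CT : ℝ := fnorm + γ * M + M with hCTdef
  have hCT0 : 0 ≤ CT := by rw [hCTdef]; have := mul_nonneg hγ0.le hM0; linarith
  -- ===== invariants =====
  have hprob : ∀ n, IsProb (μseq n) := by
    intro n
    induction n with
    | zero => exact hμ0
    | succ m ih =>
      set Φm : X → ℝ := fun x => Ppush p (fun x' => softmin φ (Qseq m x')) (μseq m) (μseq m) x with hΦmdef
      have hΦ : IsProb Φm :=
        Ppush_isProb hp0 hp1 _ (fun x a => softmin_nonneg φ (Qseq m x) a)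
          (fun x => softmin_sum φ (Qseq m x)) (μseq m) (μseq m) ih ih
      have eP2 : ∀ x, P2 φ p (Qseq m) (μseq m) x = Φm x - μseq m x := fun _ => rfl
      rw [hμrec m]
      obtain ⟨hρ0, hρ1⟩ := hρμ m
      constructor
      · intro x
        show 0 ≤ μseq m x + ρμ m * P2 φ p (Qseq m) (μseq m) x
        rw [eP2 x]
        have h1 := hΦ.1 x
        have h2 := ih.1 x
        nlinarith
      · show ∑ x, (μseq m x + ρμ m * P2 φ p (Qseq m) (μseq m) x) = 1
        calc ∑ x, (μseq m x + ρμ m * P2 φ p (Qseq m) (μseq m) x)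
            = ∑ x, ((1 - ρμ m) * μseq m x + ρμ m * Φm x) := by
              apply Finset.sum_congr rfl; intro x _
              rw [eP2 x]; ring
          _ = (1 - ρμ m) * (∑ x, μseq m x) + ρμ m * ∑ x, Φm x := by
              rw [Finset.sum_add_distrib, ← Finset.mul_sum, ← Finset.mul_sum]
          _ = 1 := by rw [ih.2, hΦ.2]; ring
  have hQbd : ∀ n, supQ (Qseq n) ≤ M := by
    intro n
    induction n with
    | zero => exact le_max_left _ _
    | succ m ih =>
      rw [hQrec m]
      apply supQ_le
      intro x a
      simp only [T2]
      have hbell := bell_bound (p := p) (f := f) hγ0.le (hprob m) hp0 hp1 fnorm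
        (fun x a => hf x a (μseq m) (hprob m)) M
        (fun x' => abs_minRow_le (fun a => le_trans (abs_le_supQ _ x' a) ih)) x a
      have h1 : |Qseq m x a| ≤ M := le_trans (abs_le_supQ _ x a) ih
      obtain ⟨hρ0, hρ1⟩ := hρQ m
      have e : Qseq m x a + ρQ m * (bell f p γ (μseq m) (Qseq m) x a - Qseq m x a)
          = (1 - ρQ m) * Qseq m x a + ρQ m * bell f p γ (μseq m) (Qseq m) x a := by ring
      rw [e]
      calc |(1 - ρQ m) * Qseq m x a + ρQ m * bell f p γ (μseq m) (Qseq m) x a|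
          ≤ |(1 - ρQ m) * Qseq m x a| + |ρQ m * bell f p γ (μseq m) (Qseq m) x a| :=
            abs_add_le _ _
        _ = (1 - ρQ m) * |Qseq m x a| + ρQ m * |bell f p γ (μseq m) (Qseq m) x a| := by
            rw [abs_mul, abs_mul, abs_of_nonneg (by linarith : (0:ℝ) ≤ 1 - ρQ m),
              abs_of_nonneg hρ0.le]
        _ ≤ (1 - ρQ m) * M + ρQ m * (fnorm + γ * M) := by
            gcongr <;> linarith
        _ ≤ (1 - ρQ m) * M + ρQ m * M := by
            gcongr
        _ = M := by ring
  -- minRow bounds for Qstarφ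
  have hQstarM : ∀ x', |minRow (Qstarφ x')| ≤ fnorm / (1 - γ) :=
    fun x' => abs_minRow_le (fun a => le_trans (abs_le_supQ _ x' a) hQball)
  -- mustar Lipschitz
  have hmuLip : ∀ Q Q' : X → A → ℝ,
      l1 (fun y => mustar Q y - mustar Q' y) ≤ Lstar * supQ (fun x a => Q x a - Q' x a) := by
    intro Q Q'
    have hfix := (hmustar Q).2
    have hfix' := (hmustar Q').2
    have hm := Phi_master hp0 hp1 cmin hcmin0 hcmin Lp hLp hφ0 Q Q'
      (mustar Q) (mustar Q') (hmustar Q).1 (hmustar Q').1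
    have e : (fun x => Ppush p (fun x' => softmin φ (Q x')) (mustar Q) (mustar Q) x
        - Ppush p (fun x' => softmin φ (Q' x')) (mustar Q') (mustar Q') x)
        = fun y => mustar Q y - mustar Q' y := by
      funext y
      rw [congrFun hfix y, congrFun hfix' y]
    rw [e] at hm
    have hκ : 1 - (Fintype.card X : ℝ) * cmin + Lp = 1 - c₁ := by rw [hc₁def]; ring
    rw [hκ] at hm
    have hl1 := l1_nonneg (fun y => mustar Q y - mustar Q' y)
    rw [hLstardef, div_mul_eq_mul_div, le_div_iff₀ hc₁pos, hLQdef]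
    nlinarith [hm, hl1]
  -- supQ of T2 bound
  have hT2bd : ∀ n x a, |T2 f p γ (Qseq n) (μseq n) x a| ≤ CT := by
    intro n x a
    simp only [T2]
    have hbell := bell_bound (p := p) (f := f) hγ0.le (hprob n) hp0 hp1 fnorm
      (fun x a => hf x a (μseq n) (hprob n)) M
      (fun x' => abs_minRow_le (fun a => le_trans (abs_le_supQ _ x' a) (hQbd n))) x a
    have h1 : |Qseq n x a| ≤ M := le_trans (abs_le_supQ _ x a) (hQbd n)
    rw [hCTdef]
    calc |bell f p γ (μseq n) (Qseq n) x a - Qseq n x a|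
        ≤ |bell f p γ (μseq n) (Qseq n) x a| + |Qseq n x a| := abs_sub _ _
      _ ≤ fnorm + γ * M + M := by linarith
  -- ===== sequences =====
  set aseq : ℕ → ℝ := fun n => l1 (fun y => μseq n y - mustar (Qseq n) y) with haseq
  set bseq : ℕ → ℝ := fun n => supQ (fun x a => Qseq n x a - Qstarφ x a) with hbseq
  have ha0 : ∀ n, 0 ≤ aseq n := fun n => l1_nonneg _
  have hb0 : ∀ n, 0 ≤ bseq n := fun n => supQ_nonneg _
  -- l1 triangle
  have l1_tri : ∀ (u v w : X → ℝ),
      l1 (fun y => u y - w y) ≤ l1 (fun y => u y - v y) + l1 (fun y => v y - w y) := by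
    intro u v w
    rw [l1, l1, l1, ← Finset.sum_add_distrib]
    apply Finset.sum_le_sum
    intro y _
    calc |u y - w y| = |(u y - v y) + (v y - w y)| := by ring_nf
      _ ≤ _ := abs_add_le _ _
  have supQzero : ∀ Q : X → A → ℝ, supQ (fun x a => Q x a - Q x a) = 0 := by
    intro Q
    apply le_antisymm
    · apply supQ_le; intro x a; simp
    · exact supQ_nonneg _
  have hl1dall : ∀ n, l1 (fun y => μseq n y - mustar Qstarφ y) ≤ aseq n + Lstar * bseq n := by
    intro n
    calc l1 (fun y => μseq n y - mustar Qstarφ y)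
        ≤ l1 (fun y => μseq n y - mustar (Qseq n) y)
          + l1 (fun y => mustar (Qseq n) y - mustar Qstarφ y) := l1_tri _ _ _
      _ ≤ aseq n + Lstar * bseq n := add_le_add le_rfl (hmuLip (Qseq n) Qstarφ)
  -- ===== recursion for aseq =====
  have hrecA : ∀ n, aseq (n+1) ≤ (1 - c₁ * ρμ n) * aseq n
      + ρμ n * ((Lstar * CT) * (ρQ n / ρμ n)) := by
    intro n
    obtain ⟨hρ0, hρ1⟩ := hρμ n
    obtain ⟨hρQ0, hρQ1⟩ := hρQ n
    have hmast := Phi_master hp0 hp1 cmin hcmin0 hcmin Lp hLp hφ0 (Qseq n) (Qseq n)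
      (μseq n) (mustar (Qseq n)) (hprob n) (hmustar (Qseq n)).1
    rw [supQzero (Qseq n), mul_zero, add_zero] at hmast
    have hκ : 1 - (Fintype.card X : ℝ) * cmin + Lp = 1 - c₁ := by rw [hc₁def]; ring
    rw [hκ] at hmast
    have hfixn : ∀ y, Ppush p (fun x' => softmin φ (Qseq n x')) (mustar (Qseq n)) (mustar (Qseq n)) y
        = mustar (Qseq n) y := fun y => congrFun (hmustar (Qseq n)).2 y
    have part1 : l1 (fun y => μseq (n+1) y - mustar (Qseq n) y) ≤ (1 - c₁ * ρμ n) * aseq n := by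
      have e : ∀ y, μseq (n+1) y - mustar (Qseq n) y
          = (1 - ρμ n) * (μseq n y - mustar (Qseq n) y)
            + ρμ n * (Ppush p (fun x' => softmin φ (Qseq n x')) (μseq n) (μseq n) y
              - Ppush p (fun x' => softmin φ (Qseq n x')) (mustar (Qseq n)) (mustar (Qseq n)) y) := by
        intro y
        rw [hμrec n]
        show μseq n y + ρμ n * P2 φ p (Qseq n) (μseq n) y - mustar (Qseq n) y = _
        rw [show P2 φ p (Qseq n) (μseq n) y
          = Ppush p (fun x' => softmin φ (Qseq n x')) (μseq n) (μseq n) y - μseq n y from rfl]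
        rw [hfixn y]
        ring
      calc l1 (fun y => μseq (n+1) y - mustar (Qseq n) y)
          = ∑ y, |(1 - ρμ n) * (μseq n y - mustar (Qseq n) y)
              + ρμ n * (Ppush p (fun x' => softmin φ (Qseq n x')) (μseq n) (μseq n) y
                - Ppush p (fun x' => softmin φ (Qseq n x')) (mustar (Qseq n)) (mustar (Qseq n)) y)| := by
            rw [l1]
            apply Finset.sum_congr rfl
            intro y _
            rw [e y]
        _ ≤ ∑ y, ((1 - ρμ n) * |μseq n y - mustar (Qseq n) y|
              + ρμ n * |Ppush p (fun x' => softmin φ (Qseq n x')) (μseq n) (μseq n) y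
                - Ppush p (fun x' => softmin φ (Qseq n x')) (mustar (Qseq n)) (mustar (Qseq n)) y|) := by
            apply Finset.sum_le_sum
            intro y _
            calc |(1 - ρμ n) * (μseq n y - mustar (Qseq n) y)
                  + ρμ n * (Ppush p (fun x' => softmin φ (Qseq n x')) (μseq n) (μseq n) y
                    - Ppush p (fun x' => softmin φ (Qseq n x')) (mustar (Qseq n)) (mustar (Qseq n)) y)|
                ≤ |(1 - ρμ n) * (μseq n y - mustar (Qseq n) y)|
                  + |ρμ n * (Ppush p (fun x' => softmin φ (Qseq n x')) (μseq n) (μseq n) y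
                    - Ppush p (fun x' => softmin φ (Qseq n x')) (mustar (Qseq n)) (mustar (Qseq n)) y)| :=
                  abs_add_le _ _
              _ = (1 - ρμ n) * |μseq n y - mustar (Qseq n) y|
                  + ρμ n * |Ppush p (fun x' => softmin φ (Qseq n x')) (μseq n) (μseq n) y
                    - Ppush p (fun x' => softmin φ (Qseq n x')) (mustar (Qseq n)) (mustar (Qseq n)) y| := by
                  rw [abs_mul, abs_mul, abs_of_nonneg (by linarith : (0:ℝ) ≤ 1 - ρμ n),
                    abs_of_nonneg hρ0.le]
        _ = (1 - ρμ n) * l1 (fun y => μseq n y - mustar (Qseq n) y)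
            + ρμ n * l1 (fun y => Ppush p (fun x' => softmin φ (Qseq n x')) (μseq n) (μseq n) y
              - Ppush p (fun x' => softmin φ (Qseq n x')) (mustar (Qseq n)) (mustar (Qseq n)) y) := by
            rw [Finset.sum_add_distrib, ← Finset.mul_sum, ← Finset.mul_sum]
            rfl
        _ ≤ (1 - ρμ n) * aseq n + ρμ n * ((1 - c₁) * aseq n) := by
            have h1 : l1 (fun y => μseq n y - mustar (Qseq n) y) = aseq n := rfl
            have h2 : l1 (fun y => Ppush p (fun x' => softmin φ (Qseq n x')) (μseq n) (μseq n) y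
                - Ppush p (fun x' => softmin φ (Qseq n x')) (mustar (Qseq n)) (mustar (Qseq n)) y)
                ≤ (1 - c₁) * aseq n := hmast
            rw [h1]
            have hfac : (0:ℝ) ≤ ρμ n := hρ0.le
            nlinarith [h2]
        _ = (1 - c₁ * ρμ n) * aseq n := by ring
    have part2 : l1 (fun y => mustar (Qseq n) y - mustar (Qseq (n+1)) y)
        ≤ Lstar * (CT * ρQ n) := by
      calc l1 (fun y => mustar (Qseq n) y - mustar (Qseq (n+1)) y)
          ≤ Lstar * supQ (fun x a => Qseq n x a - Qseq (n+1) x a) := hmuLip _ _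
        _ ≤ Lstar * (CT * ρQ n) := by
            apply mul_le_mul_of_nonneg_left _ hLstar0
            apply supQ_le
            intro x a
            rw [hQrec n]
            show |Qseq n x a - (Qseq n x a + ρQ n * T2 f p γ (Qseq n) (μseq n) x a)| ≤ CT * ρQ n
            rw [show Qseq n x a - (Qseq n x a + ρQ n * T2 f p γ (Qseq n) (μseq n) x a)
              = -(ρQ n * T2 f p γ (Qseq n) (μseq n) x a) by ring, abs_neg, abs_mul,
              abs_of_nonneg hρQ0.le]
            calc ρQ n * |T2 f p γ (Qseq n) (μseq n) x a| ≤ ρQ n * CT :=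
                mul_le_mul_of_nonneg_left (hT2bd n x a) hρQ0.le
              _ = CT * ρQ n := mul_comm _ _
    have hrw : ρμ n * ((Lstar * CT) * (ρQ n / ρμ n)) = Lstar * (CT * ρQ n) := by
      field_simp
    have tri : aseq (n+1) ≤ l1 (fun y => μseq (n+1) y - mustar (Qseq n) y)
        + l1 (fun y => mustar (Qseq n) y - mustar (Qseq (n+1)) y) :=
      l1_tri (μseq (n+1)) (mustar (Qseq n)) (mustar (Qseq (n+1)))
    rw [hrw]
    linarith
  -- ===== recursion for bseq =====
  have hrecB : ∀ n, bseq (n+1) ≤ (1 - c₂ * ρQ n) * bseq n + ρQ n * (LB * aseq n) := by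
    intro n
    obtain ⟨hρ0, hρ1⟩ := hρQ n
    have hμstar : IsProb (mustar Qstarφ) := (hmustar Qstarφ).1
    have hl1d := hl1dall n
    have hbd := bell_diff (p := p) (f := f) hγ0.le (hprob n) hp0 hp1
      (Lf * l1 (fun y => μseq n y - mustar Qstarφ y))
      (fun x a => hLf x a (μseq n) (mustar Qstarφ) (hprob n) hμstar)
      (Lp * l1 (fun y => μseq n y - mustar Qstarφ y))
      (fun x a => hLp x a (μseq n) (mustar Qstarφ) (hprob n) hμstar)
      (bseq n) (fun x' => abs_minRow_sub (fun a => abs_le_supQ (fun x a => Qseq n x a - Qstarφ x a) x' a))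
      (fnorm / (1 - γ)) (div_nonneg hfnorm0 h1γ.le) hQstarM
    show supQ (fun x a => Qseq (n+1) x a - Qstarφ x a) ≤ _
    apply supQ_le
    intro x a
    rw [hQrec n]
    show |Qseq n x a + ρQ n * T2 f p γ (Qseq n) (μseq n) x a - Qstarφ x a| ≤ _
    have eQfix : Qstarφ x a = bell f p γ (mustar Qstarφ) Qstarφ x a :=
      (congrFun (congrFun hQfix x) a).symm
    have e : Qseq n x a + ρQ n * T2 f p γ (Qseq n) (μseq n) x a - Qstarφ x a
        = (1 - ρQ n) * (Qseq n x a - Qstarφ x a)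
          + ρQ n * (bell f p γ (μseq n) (Qseq n) x a - bell f p γ (mustar Qstarφ) Qstarφ x a) := by
      rw [show T2 f p γ (Qseq n) (μseq n) x a
        = bell f p γ (μseq n) (Qseq n) x a - Qseq n x a from rfl]
      linear_combination (-(ρQ n)) * eQfix
    rw [e]
    have h1 : |Qseq n x a - Qstarφ x a| ≤ bseq n :=
      abs_le_supQ (fun x a => Qseq n x a - Qstarφ x a) x a
    have h2 := hbd x a
    have halg : Lf * l1 (fun y => μseq n y - mustar Qstarφ y)
        + γ * (Lp * l1 (fun y => μseq n y - mustar Qstarφ y) * (fnorm / (1 - γ)))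
        = LB * l1 (fun y => μseq n y - mustar Qstarφ y) := by
      rw [hLBdef]
      field_simp
    have h3 : |bell f p γ (μseq n) (Qseq n) x a - bell f p γ (mustar Qstarφ) Qstarφ x a|
        ≤ γ * bseq n + LB * (aseq n + Lstar * bseq n) := by
      have hLBl1 : LB * l1 (fun y => μseq n y - mustar Qstarφ y)
          ≤ LB * (aseq n + Lstar * bseq n) := mul_le_mul_of_nonneg_left hl1d hLB0
      calc |bell f p γ (μseq n) (Qseq n) x a - bell f p γ (mustar Qstarφ) Qstarφ x a|
          ≤ Lf * l1 (fun y => μseq n y - mustar Qstarφ y) + γ * bseq n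
            + γ * (Lp * l1 (fun y => μseq n y - mustar Qstarφ y) * (fnorm / (1 - γ))) := h2
        _ = LB * l1 (fun y => μseq n y - mustar Qstarφ y) + γ * bseq n := by
            linear_combination halg
        _ ≤ LB * (aseq n + Lstar * bseq n) + γ * bseq n := by linarith [hLBl1]
        _ = γ * bseq n + LB * (aseq n + Lstar * bseq n) := by ring
    calc |(1 - ρQ n) * (Qseq n x a - Qstarφ x a)
          + ρQ n * (bell f p γ (μseq n) (Qseq n) x a - bell f p γ (mustar Qstarφ) Qstarφ x a)|
        ≤ |(1 - ρQ n) * (Qseq n x a - Qstarφ x a)|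
          + |ρQ n * (bell f p γ (μseq n) (Qseq n) x a - bell f p γ (mustar Qstarφ) Qstarφ x a)| :=
          abs_add_le _ _
      _ = (1 - ρQ n) * |Qseq n x a - Qstarφ x a|
          + ρQ n * |bell f p γ (μseq n) (Qseq n) x a - bell f p γ (mustar Qstarφ) Qstarφ x a| := by
          rw [abs_mul, abs_mul, abs_of_nonneg (by linarith : (0:ℝ) ≤ 1 - ρQ n),
            abs_of_nonneg hρ0.le]
      _ ≤ (1 - ρQ n) * bseq n + ρQ n * (γ * bseq n + LB * (aseq n + Lstar * bseq n)) := by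
          gcongr <;> linarith
      _ = (1 - c₂ * ρQ n) * bseq n + ρQ n * (LB * aseq n) := by
          rw [hc₂def]
          ring
  -- ===== convergence of aseq and bseq =====
  have hdivSumμ : Tendsto (fun n => ∑ i ∈ range n, ρμ i) atTop atTop :=
    (not_summable_iff_tendsto_nat_atTop_of_nonneg (fun n => (hρμ n).1.le)).mp hdivμ
  have hdivSumQ : Tendsto (fun n => ∑ i ∈ range n, ρQ i) atTop atTop :=
    (not_summable_iff_tendsto_nat_atTop_of_nonneg (fun n => (hρQ n).1.le)).mp hdivQ
  have hεa : Tendsto (fun n => (Lstar * CT) * (ρQ n / ρμ n)) atTop (nhds 0) := by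
    have := hratio.const_mul (Lstar * CT)
    simpa using this
  have haconv : Tendsto aseq atTop (nhds 0) :=
    seq_conv aseq ρμ (fun n => (Lstar * CT) * (ρQ n / ρμ n)) c₁ hc₁pos ha0
      (fun n => (hρμ n).1.le)
      (fun n => mul_le_one₀ hc₁le1 (hρμ n).1.le (hρμ n).2.le)
      hrecA hdivSumμ hεa
  have hεb : Tendsto (fun n => LB * aseq n) atTop (nhds 0) := by
    have := haconv.const_mul LB
    simpa using this
  have hbconv : Tendsto bseq atTop (nhds 0) :=
    seq_conv bseq ρQ (fun n => LB * aseq n) c₂ hc₂pos hb0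
      (fun n => (hρQ n).1.le)
      (fun n => mul_le_one₀ hc₂le1 (hρQ n).1.le (hρQ n).2.le)
      hrecB hdivSumQ hεb
  -- ===== conclusion =====
  constructor
  · rw [tendsto_pi_nhds]
    intro x
    have hsum : Tendsto (fun n => aseq n + Lstar * bseq n) atTop (nhds 0) := by
      have := haconv.add (hbconv.const_mul Lstar)
      simpa using this
    have hpt : ∀ n, ‖μseq n x - mustar Qstarφ x‖ ≤ aseq n + Lstar * bseq n := by
      intro n
      rw [Real.norm_eq_abs]
      calc |μseq n x - mustar Qstarφ x| ≤ l1 (fun y => μseq n y - mustar Qstarφ y) :=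
          abs_le_l1 (fun y => μseq n y - mustar Qstarφ y) x
        _ ≤ aseq n + Lstar * bseq n := hl1dall n
    exact tendsto_sub_nhds_zero_iff.mp (squeeze_zero_norm hpt hsum)
  · rw [tendsto_pi_nhds]
    intro x
    rw [tendsto_pi_nhds]
    intro a
    have hpt : ∀ n, ‖Qseq n x a - Qstarφ x a‖ ≤ bseq n := by
      intro n
      rw [Real.norm_eq_abs]
      exact abs_le_supQ (fun x a => Qseq n x a - Qstarφ x a) x a
    exact tendsto_sub_nhds_zero_iff.mp (squeeze_zero_norm hpt hbconv)
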